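/- Let s be a positive integer. The alternating word (-+)^s- (of length 2s+1) satisfies (-+)^s- ≥ W for every word W over {+,-,*} of length at most s+1, except W = (+)^{s+1}. -/

import Mathlib

inductive Symb : Type
  | plus | minus | star
deriving DecidableEq


/-- the dual of a symbol: `+` ↦ `-`, `-` ↦ `+`, `*` ↦ `*` -/
def dualSym : Symb → Symb
  | Symb.plus => Symb.minus
  | Symb.minus => Symb.plus
  | Symb.star => Symb.star

/-- the dual (involution) of a word: reverse and dualize each symbol -/
def dualWord (W : List Symb) : List Symb := (W.map dualSym).reverse

/-- the arc relation of the reflexive path `P(W)` on vertices `{0,…,|W|}` -/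
def pathArc (W : List Symb) (i j : ℕ) : Prop :=
  i ≤ W.length ∧ j ≤ W.length ∧
    (i = j ∨ (j = i + 1 ∧ (W[i]? = some Symb.plus ∨ W[i]? = some Symb.star))
           ∨ (i = j + 1 ∧ (W[j]? = some Symb.minus ∨ W[j]? = some Symb.star)))

/-- `f` is an end-point preserving homomorphism from the path `P(V)` onto the path `P(U)` -/
def EPHom (V U : List Symb) (f : ℕ → ℕ) : Prop :=
  f 0 = 0 ∧ f V.length = U.length ∧
  (∀ i j, pathArc V i j → pathArc U (f i) (f j)) ∧
  (∀ m, m ≤ U.length → ∃ i, i ≤ V.length ∧ f i = m)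

/-- the order on words: `U ≤ V` iff there is an end-point preserving
homomorphism from `P(V)` onto `P(U)` -/
def wle (U V : List Symb) : Prop := ∃ f, EPHom V U f

namespace Stmt13Aux

abbrev J (s : ℕ) : List Symb := (List.replicate s [Symb.minus, Symb.plus]).flatten

lemma Jget (s : ℕ) : ∀ i, (J s)[i]? =
    if i < 2*s then some (if i % 2 = 0 then Symb.minus else Symb.plus) else none := by
  induction s with
  | zero => intro i; simp [J]
  | succ s ih =>
    intro i
    have hJ : J (s+1) = Symb.minus :: Symb.plus :: J s := by
      simp [J, List.replicate_succ]
    rw [hJ]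
    match i with
    | 0 => simp
    | 1 =>
      have h1 : 1 < 2*(s+1) := by omega
      simp [h1]
    | (i+2) =>
      simp only [List.getElem?_cons_succ]
      rw [ih i]
      have h2 : (i+2) % 2 = i % 2 := by omega
      by_cases h : i < 2*s
      · have h' : i + 2 < 2*(s+1) := by omega
        simp [h, h', h2]
      · have h' : ¬ (i + 2 < 2*(s+1)) := by omega
        simp [h, h']

lemma Jlen (s : ℕ) : (J s).length = 2*s := by
  induction s with
  | zero => simp [J]
  | succ s ih =>
    have hJ : J (s+1) = Symb.minus :: Symb.plus :: J s := by
      simp [J, List.replicate_succ]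
    rw [hJ]
    simp only [List.length_cons, ih]
    omega

lemma Vget (s i : ℕ) (h : i < 2*s+1) :
    (J s ++ [Symb.minus])[i]? = some (if i % 2 = 0 then Symb.minus else Symb.plus) := by
  rcases lt_or_ge i (2*s) with h1 | h1
  · rw [List.getElem?_append_left (by rw [Jlen]; exact h1), Jget]
    simp [h1]
  · have hi : i = 2*s := by omega
    subst hi
    rw [List.getElem?_append_right (by rw [Jlen])]
    rw [Jlen]
    simp

lemma notplus (W : List Symb) (k : ℕ) (hk : k < W.length) (h : W[k]? ≠ some Symb.plus) :
    W[k]? = some Symb.minus ∨ W[k]? = some Symb.star := by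
  have hg : W[k]? = some W[k] := List.getElem?_eq_getElem hk
  rw [hg] at h ⊢
  cases hc : W[k] <;> simp_all

lemma arc_loop (W : List Symb) (a : ℕ) (ha : a ≤ W.length) : pathArc W a a :=
  ⟨ha, ha, Or.inl rfl⟩

lemma arc_up (W : List Symb) (a : ℕ) (ha : a + 1 ≤ W.length)
    (h : W[a]? = some Symb.plus ∨ W[a]? = some Symb.star) : pathArc W a (a+1) :=
  ⟨by omega, ha, Or.inr (Or.inl ⟨rfl, h⟩)⟩

lemma arc_down (W : List Symb) (a : ℕ) (ha : a + 1 ≤ W.length)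
    (h : W[a]? = some Symb.minus ∨ W[a]? = some Symb.star) : pathArc W (a+1) a :=
  ⟨ha, by omega, Or.inr (Or.inr ⟨rfl, h⟩)⟩

lemma wle_of (s : ℕ) (W : List Symb) (f : ℕ → ℕ)
    (h0 : f 0 = 0) (hend : f (2*s+1) = W.length)
    (hbd : ∀ i, i ≤ 2*s+1 → f i ≤ W.length)
    (hdown : ∀ k, k ≤ s → pathArc W (f (2*k+1)) (f (2*k)))
    (hup : ∀ k, k < s → pathArc W (f (2*k+1)) (f (2*k+2)))
    (hsurj : ∀ m, m ≤ W.length → ∃ i, i ≤ 2*s+1 ∧ f i = m) :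
    wle W (J s ++ [Symb.minus]) := by
  have hVlen : (J s ++ [Symb.minus]).length = 2*s+1 := by
    rw [List.length_append, Jlen]; rfl
  refine ⟨f, h0, ?_, ?_, ?_⟩
  · rw [hVlen, hend]
  · rintro i j ⟨hi, hj, hcase⟩
    rw [hVlen] at hi hj
    rcases hcase with rfl | ⟨rfl, hsym⟩ | ⟨rfl, hsym⟩
    · exact arc_loop W (f i) (hbd i hi)
    · -- j = i+1, V[i] = plus or star; so i is odd, i = 2k+1, k < s
      have hi' : i < 2*s+1 := by omega
      rw [Vget s i hi'] at hsym
      have hodd : i % 2 = 1 := by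
        rcases Nat.mod_two_eq_zero_or_one i with h | h
        · rw [h] at hsym; simp at hsym
        · exact h
      obtain ⟨k, rfl⟩ : ∃ k, i = 2*k+1 := ⟨i/2, by omega⟩
      have hk : k < s := by omega
      exact hup k hk
    · -- i = j+1, V[j] = minus or star; so j is even, j = 2k, k ≤ s
      have hj' : j < 2*s+1 := by omega
      rw [Vget s j hj'] at hsym
      have heven : j % 2 = 0 := by
        rcases Nat.mod_two_eq_zero_or_one j with h | h
        · exact h
        · rw [h] at hsym; simp at hsym
      obtain ⟨k, rfl⟩ : ∃ k, j = 2*k := ⟨j/2, by omega⟩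
      have hk : k ≤ s := by omega
      exact hdown k hk
  · intro m hm
    obtain ⟨i, hi, hfi⟩ := hsurj m hm
    exact ⟨i, by rw [hVlen]; exact hi, hfi⟩

end Stmt13Aux

open Stmt13Aux in
/-- `(-+)^s- ≥ W` for every word `W` of length at most `s+1` except `(+)^{s+1}`. -/
theorem stmt_13 (s : ℕ) (hs : 1 ≤ s) (W : List Symb)
    (hlen : W.length ≤ s + 1) (hW : W ≠ List.replicate (s + 1) Symb.plus) :
    wle W ((List.replicate s [Symb.minus, Symb.plus]).flatten ++ [Symb.minus]) := by
  set n := W.length with hn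
  have one_ne : ¬ ((1:ℕ) = 0) := by omega
  by_cases hp : W[s]? = some Symb.plus
  · -- Case C : W has length s+1 and ends with plus.
    have hns : n = s + 1 := by
      have : s < W.length := by
        by_contra h
        push_neg at h
        rw [List.getElem?_eq_none h] at hp
        cases hp
      omega
    -- existence of a non-plus entry
    have hex : ∃ k, k ≤ s ∧ ¬ (W[k]? = some Symb.plus) := by
      by_contra h
      push_neg at h
      apply hW
      apply List.ext_getElem?
      intro i
      rw [List.getElem?_replicate]
      by_cases hi : i < s + 1
      · rw [h i (by omega)]
        simp [hi]
      · rw [List.getElem?_eq_none (by omega)]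
        simp [hi]
    obtain ⟨k0, hk0, hk0p⟩ := hex
    set P : ℕ → Prop := fun k => ¬ (W[k]? = some Symb.plus) with hPdef
    have hPk0 : P k0 := hk0p
    set j : ℕ := Nat.findGreatest P s with hjdef
    have hj : P j := Nat.findGreatest_spec hk0 hPk0
    have hjle : j ≤ s := Nat.findGreatest_le s
    have hjs : j < s := by
      rcases Nat.lt_or_ge j s with h | h
      · exact h
      · exfalso; have : j = s := by omega
        rw [this] at hj; exact hj hp
    have hmax : ∀ i, j < i → i ≤ s → W[i]? = some Symb.plus := by
      intro i hji his
      by_contra hcon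
      exact Nat.findGreatest_is_greatest hji his hcon
    refine wle_of s W (fun i =>
      if i % 2 = 0 then (if i/2 ≤ j then i/2 else min (i/2+1) n)
      else (if i/2 < j ∧ W[i/2]? = some Symb.plus then i/2 else min (i/2+1) n))
      ?_ ?_ ?_ ?_ ?_ ?_
    · simp
    · have h1 : (2*s+1) % 2 = 1 := by omega
      have h2 : (2*s+1) / 2 = s := by omega
      have hno : ¬ (s < j ∧ W[s]? = some Symb.plus) := fun h => absurd h.1 (by omega)
      simp only [h1, h2, if_neg one_ne, if_neg hno]
      omega
    · intro i hi
      split <;> (try split) <;> omega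
    · -- hdown
      intro k hk
      have e1 : (2*k) % 2 = 0 := by omega
      have e2 : (2*k) / 2 = k := by omega
      have e3 : (2*k+1) % 2 = 1 := by omega
      have e4 : (2*k+1) / 2 = k := by omega
      simp only [e1, e2, e3, e4, if_neg one_ne, reduceIte]
      rcases Nat.lt_trichotomy k j with hkj | hkj | hkj
      · by_cases hpk : W[k]? = some Symb.plus
        · have hyes : k < j ∧ W[k]? = some Symb.plus := ⟨hkj, hpk⟩
          simp only [if_pos hyes, if_pos (le_of_lt hkj)]
          exact arc_loop W k (by omega)
        · have hne : ¬ (k < j ∧ W[k]? = some Symb.plus) := fun h => hpk h.2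
          simp only [if_neg hne, if_pos (le_of_lt hkj)]
          have hm : min (k+1) n = k + 1 := by omega
          rw [hm]
          exact arc_down W k (by omega) (notplus W k (by omega) hpk)
      · have hne : ¬ (k < j ∧ W[k]? = some Symb.plus) := fun h => absurd h.1 (by omega)
        simp only [if_neg hne, if_pos (le_of_eq hkj)]
        have hm : min (k+1) n = k + 1 := by omega
        rw [hm]
        have hjk : ¬ (W[k]? = some Symb.plus) := by rw [hkj]; exact hj
        exact arc_down W k (by omega) (notplus W k (by omega) hjk)
      · have hne : ¬ (k < j ∧ W[k]? = some Symb.plus) := fun h => absurd h.1 (by omega)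
        have hne2 : ¬ (k ≤ j) := by omega
        simp only [if_neg hne, if_neg hne2]
        exact arc_loop W (min (k+1) n) (by omega)
    · -- hup
      intro k hk
      have e1 : (2*k+2) % 2 = 0 := by omega
      have e2 : (2*k+2) / 2 = k+1 := by omega
      have e3 : (2*k+1) % 2 = 1 := by omega
      have e4 : (2*k+1) / 2 = k := by omega
      simp only [e1, e2, e3, e4, if_neg one_ne, reduceIte]
      rcases Nat.lt_or_ge k j with hkj | hkj
      · by_cases hpk : W[k]? = some Symb.plus
        · have hyes : k < j ∧ W[k]? = some Symb.plus := ⟨hkj, hpk⟩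
          simp only [if_pos hyes, if_pos (by omega : k+1 ≤ j)]
          exact arc_up W k (by omega) (Or.inl hpk)
        · have hne : ¬ (k < j ∧ W[k]? = some Symb.plus) := fun h => hpk h.2
          simp only [if_neg hne, if_pos (by omega : k+1 ≤ j)]
          have hm : min (k+1) n = k + 1 := by omega
          rw [hm]
          exact arc_loop W (k+1) (by omega)
      · have hne : ¬ (k < j ∧ W[k]? = some Symb.plus) := fun h => absurd h.1 (by omega)
        have hne2 : ¬ (k + 1 ≤ j) := by omega
        simp only [if_neg hne, if_neg hne2]
        have hm : min (k+1) n = k + 1 := by omega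
        have hm2 : min (k+2) n = k + 2 := by omega
        rw [hm, hm2]
        exact arc_up W (k+1) (by omega) (Or.inl (hmax (k+1) (by omega) (by omega)))
    · -- hsurj
      intro m hm
      rcases le_or_gt m j with hmj | hmj
      · refine ⟨2*m, by omega, ?_⟩
        have e1 : (2*m) % 2 = 0 := by omega
        have e2 : (2*m) / 2 = m := by omega
        simp only [e1, e2, reduceIte, if_pos hmj]
      · refine ⟨2*(m-1)+1, by omega, ?_⟩
        have e3 : (2*(m-1)+1) % 2 = 1 := by omega
        have e4 : (2*(m-1)+1) / 2 = m-1 := by omega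
        have hne : ¬ (m - 1 < j ∧ W[m-1]? = some Symb.plus) := fun h => absurd h.1 (by omega)
        simp only [e3, e4, if_neg one_ne, if_neg hne]
        omega
  · -- Cases A/B : the last symbol (if any) is not plus, or W is short.
    refine wle_of s W (fun i =>
      if i % 2 = 0 then min (i/2) n
      else (if W[i/2]? = some Symb.plus then min (i/2) n else min (i/2+1) n))
      ?_ ?_ ?_ ?_ ?_ ?_
    · simp
    · have h1 : (2*s+1) % 2 = 1 := by omega
      have h2 : (2*s+1) / 2 = s := by omega
      simp only [h1, h2, if_neg one_ne, if_neg hp]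
      omega
    · intro i hi
      split <;> (try split) <;> omega
    · -- hdown
      intro k hk
      have e1 : (2*k) % 2 = 0 := by omega
      have e2 : (2*k) / 2 = k := by omega
      have e3 : (2*k+1) % 2 = 1 := by omega
      have e4 : (2*k+1) / 2 = k := by omega
      simp only [e1, e2, e3, e4, if_neg one_ne, reduceIte]
      by_cases hpk : W[k]? = some Symb.plus
      · simp only [if_pos hpk]
        exact arc_loop W (min k n) (by omega)
      · simp only [if_neg hpk]
        rcases Nat.lt_or_ge k n with hkn | hkn
        · have hm : min (k+1) n = k + 1 := by omega
          have hm2 : min k n = k := by omega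
          rw [hm, hm2]
          exact arc_down W k (by omega) (notplus W k (by omega) hpk)
        · have hm : min (k+1) n = n := by omega
          have hm2 : min k n = n := by omega
          rw [hm, hm2]
          exact arc_loop W n (le_refl n)
    · -- hup
      intro k hk
      have e1 : (2*k+2) % 2 = 0 := by omega
      have e2 : (2*k+2) / 2 = k+1 := by omega
      have e3 : (2*k+1) % 2 = 1 := by omega
      have e4 : (2*k+1) / 2 = k := by omega
      simp only [e1, e2, e3, e4, if_neg one_ne, reduceIte]
      by_cases hpk : W[k]? = some Symb.plus
      · simp only [if_pos hpk]
        have hkn : k < n := by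
          by_contra h
          push_neg at h
          rw [List.getElem?_eq_none h] at hpk
          cases hpk
        have hm : min k n = k := by omega
        have hm2 : min (k+1) n = k + 1 := by omega
        rw [hm, hm2]
        exact arc_up W k (by omega) (Or.inl hpk)
      · simp only [if_neg hpk]
        exact arc_loop W (min (k+1) n) (by omega)
    · -- hsurj
      intro m hm
      rcases le_or_gt m s with hms | hms
      · refine ⟨2*m, by omega, ?_⟩
        have e1 : (2*m) % 2 = 0 := by omega
        have e2 : (2*m) / 2 = m := by omega
        simp only [e1, e2, reduceIte]
        omega
      · have hm' : m = s + 1 := by omega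
        refine ⟨2*s+1, le_refl _, ?_⟩
        have e3 : (2*s+1) % 2 = 1 := by omega
        have e4 : (2*s+1) / 2 = s := by omega
        simp only [e3, e4, if_neg one_ne, if_neg hp]
        omega
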